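/- Let m ≥ 3 and let k, j be integers with 1 ≤ k, j ≤ m − 1 such that m does not divide 2k and m does not divide 2j. Then the real number sin(jπ/m)²·sin(2jπ/m) / (sin(kπ/m)²·sin(2kπ/m)) lies in the subfield ℚ(ζ_m) of ℂ generated by ζ_m = e^{2πi/m}. Equivalently, the Gamma-value Γ(f) of the monomial equation f = x_k·x_{m−k}/(x_j·x_{m−j}) coming from the polarization of J_m lies in ℚ(ζ_m). -/

import Mathlib

/-- Example 6.4.7. Let `m ≥ 3` and let `k, j ∈ {1, …, m-1}` be such that
`m ∤ 2k` and `m ∤ 2j`. Then `sin(jπ/m)²·sin(2jπ/m) / (sin(kπ/m)²·sin(2kπ/m))` lies in the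
subfield `ℚ(ζ_m)` of `ℂ`; this is the Gamma-value of the polarization equation
`x_k·x_{m-k}/(x_j·x_{m-j})` for the Mumford–Tate group of the Jacobian of `y² = xᵐ + 1`. -/
theorem sine_ratio_mem_cyclotomic
    (m : ℕ) (hm : 3 ≤ m) (k j : ℕ)
    (hk1 : 1 ≤ k) (hk2 : k ≤ m - 1) (hj1 : 1 ≤ j) (hj2 : j ≤ m - 1)
    (hk : ¬ (m ∣ 2 * k)) (hj : ¬ (m ∣ 2 * j)) :
    ((Real.sin ((j : ℝ) * Real.pi / m) ^ 2 * Real.sin (2 * (j : ℝ) * Real.pi / m) /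
        (Real.sin ((k : ℝ) * Real.pi / m) ^ 2 * Real.sin (2 * (k : ℝ) * Real.pi / m)) : ℝ) : ℂ)
      ∈ Algebra.adjoin ℚ
          ({Complex.exp (2 * (Real.pi : ℂ) * Complex.I / (m : ℂ))} : Set ℂ) := by
  have hmR : (m : ℝ) ≠ 0 := Nat.cast_ne_zero.mpr (by omega)
  have hmC : (m : ℂ) ≠ 0 := Nat.cast_ne_zero.mpr (by omega)
  set ζ : ℂ := Complex.exp (2 * (Real.pi : ℂ) * Complex.I / (m : ℂ)) with hζ
  -- ζ is integral over ℚ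
  have hζm : ζ ^ m = 1 := by
    rw [hζ, ← Complex.exp_nat_mul, mul_div_cancel₀ _ hmC]
    simpa using Complex.exp_two_pi_mul_I
  have hint : IsIntegral ℚ ζ := by
    refine ⟨Polynomial.X ^ m - 1, ?_, ?_⟩
    · simpa using Polynomial.monic_X_pow_sub_C (1 : ℚ) (by omega)
    · simp [Polynomial.eval₂, hζm]
  have hsub : (IntermediateField.adjoin ℚ {ζ}).toSubalgebra = Algebra.adjoin ℚ {ζ} :=
    IntermediateField.adjoin_simple_toSubalgebra_of_isAlgebraic hint.isAlgebraic
  rw [← hsub, IntermediateField.mem_toSubalgebra]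
  set K := IntermediateField.adjoin ℚ {ζ} with hK
  have hζK : ζ ∈ K := IntermediateField.mem_adjoin_simple_self ℚ ζ
  -- powers of ζ in terms of exp
  have hpow : ∀ a : ℕ, ζ ^ a = Complex.exp (((2 * a * Real.pi / m : ℝ) : ℂ) * Complex.I) := by
    intro a
    rw [hζ, ← Complex.exp_nat_mul]
    congr 1
    push_cast
    field_simp
  have hsc : ∀ a : ℕ, ζ ^ a - (ζ ^ a)⁻¹ =
        2 * Complex.I * (Real.sin (2 * a * Real.pi / m) : ℂ) ∧
      ζ ^ a + (ζ ^ a)⁻¹ = 2 * (Real.cos (2 * a * Real.pi / m) : ℂ) := by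
    intro a
    rw [hpow a, ← Complex.exp_neg, Complex.exp_mul_I, ← neg_mul, Complex.exp_mul_I]
    rw [Complex.sin_neg, Complex.cos_neg, ← Complex.ofReal_sin, ← Complex.ofReal_cos]
    constructor <;> ring
  -- nonvanishing of the denominators (real side)
  have hsin1 : ∀ a : ℕ, 1 ≤ a → a ≤ m - 1 → Real.sin ((a : ℝ) * Real.pi / m) ≠ 0 := by
    intro a ha1 ha2
    have h1 : 0 < (a : ℝ) * Real.pi / m := by
      apply div_pos (mul_pos (by exact_mod_cast ha1) Real.pi_pos)
      exact_mod_cast (by omega : 0 < m)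
    have h2 : (a : ℝ) * Real.pi / m < Real.pi := by
      rw [div_lt_iff₀ (by exact_mod_cast (by omega : 0 < m))]
      have : (a : ℝ) < m := by exact_mod_cast (by omega : a < m)
      nlinarith [Real.pi_pos]
    exact ne_of_gt (Real.sin_pos_of_pos_of_lt_pi h1 h2)
  have hsin2 : ∀ a : ℕ, ¬ (m ∣ 2 * a) → Real.sin (2 * (a : ℝ) * Real.pi / m) ≠ 0 := by
    intro a ha h0
    rw [Real.sin_eq_zero_iff] at h0
    obtain ⟨n, hn⟩ := h0
    apply ha
    have : (n : ℝ) * (m : ℝ) = 2 * a := by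
      field_simp at hn
      nlinarith [Real.pi_pos, hn]
    have hz : n * (m : ℤ) = 2 * a := by exact_mod_cast this
    have hdvd : (m : ℤ) ∣ 2 * a := ⟨n, by linarith [hz]⟩
    exact_mod_cast hdvd
  have hsjk := hsin1 k hk1 hk2
  have hs2k := hsin2 k hk
  have hs2j := hsin2 j hj
  -- half-angle: sin(aπ/m)^2 = (1 - cos(2aπ/m))/2
  have hhalf : ∀ a : ℕ, Real.sin ((a : ℝ) * Real.pi / m) ^ 2 =
      (1 - Real.cos (2 * (a : ℝ) * Real.pi / m)) / 2 := by
    intro a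
    rw [show (2 * (a : ℝ) * Real.pi / m) = 2 * ((a : ℝ) * Real.pi / m) by ring,
      Real.cos_two_mul]
    have := Real.sin_sq_add_cos_sq ((a : ℝ) * Real.pi / m)
    linarith
  have hcosk : (1 : ℝ) - Real.cos (2 * (k : ℝ) * Real.pi / m) ≠ 0 := by
    intro h0
    apply hsjk
    have := hhalf k
    rw [h0] at this
    simpa [pow_eq_zero_iff] using this
  have hcC : (1 : ℂ) - (Real.cos (2 * (k : ℝ) * Real.pi / m) : ℂ) ≠ 0 := by
    exact_mod_cast hcosk
  have hskC : ((Real.sin (2 * (k : ℝ) * Real.pi / m) : ℝ) : ℂ) ≠ 0 :=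
    Complex.ofReal_ne_zero.mpr hs2k
  -- the key identity
  have key : ((Real.sin ((j : ℝ) * Real.pi / m) ^ 2 * Real.sin (2 * (j : ℝ) * Real.pi / m) /
        (Real.sin ((k : ℝ) * Real.pi / m) ^ 2 * Real.sin (2 * (k : ℝ) * Real.pi / m)) : ℝ) : ℂ)
      = ((2 - (ζ ^ j + (ζ ^ j)⁻¹)) * (ζ ^ j - (ζ ^ j)⁻¹)) /
        ((2 - (ζ ^ k + (ζ ^ k)⁻¹)) * (ζ ^ k - (ζ ^ k)⁻¹)) := by
    rw [(hsc j).1, (hsc j).2, (hsc k).1, (hsc k).2, hhalf j, hhalf k]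
    have hden1 : (((1 - Real.cos (2 * (k : ℝ) * Real.pi / m)) / 2 : ℂ) *
        (Real.sin (2 * (k : ℝ) * Real.pi / m) : ℂ)) ≠ 0 := by
      exact mul_ne_zero (div_ne_zero (by exact_mod_cast hcosk) two_ne_zero) hskC
    have hden2 : ((2 - 2 * (Real.cos (2 * (k : ℝ) * Real.pi / m) : ℂ)) *
        (2 * Complex.I * (Real.sin (2 * (k : ℝ) * Real.pi / m) : ℂ))) ≠ 0 := by
      refine mul_ne_zero ?_ (mul_ne_zero (mul_ne_zero two_ne_zero Complex.I_ne_zero) hskC)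
      intro h0
      exact hcC (by linear_combination h0 / 2)
    simp only [Complex.ofReal_div, Complex.ofReal_mul, Complex.ofReal_sub,
      Complex.ofReal_one, Complex.ofReal_ofNat]
    rw [div_eq_div_iff hden1 hden2]
    ring
  rw [key]
  -- membership
  have hj' : ζ ^ j ∈ K := pow_mem hζK j
  have hk' : ζ ^ k ∈ K := pow_mem hζK k
  exact div_mem (mul_mem (sub_mem (ofNat_mem K 2) (add_mem hj' (inv_mem hj')))
      (sub_mem hj' (inv_mem hj')))
    (mul_mem (sub_mem (ofNat_mem K 2) (add_mem hk' (inv_mem hk')))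
      (sub_mem hk' (inv_mem hk')))
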